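/- Let A and B be groups and let G = A ∗ B be their free product, with canonical inclusions ι_A : A → G and ι_B : B → G. Then: (1) for every g ∈ G not lying in ι_A(A), the intersection ι_A(A) ∩ g·ι_A(A)·g⁻¹ is trivial (so ι_A(A) is a malnormal subgroup of G); and (2) for every g ∈ G, the intersection ι_A(A) ∩ g·ι_B(B)·g⁻¹ is trivial. -/

import Mathlib

namespace Stmt10Aux

open Monoid Monoid.CoprodI Monoid.CoprodI.Word

variable {ι : Type*} {G : ι → Type*} [∀ i, Group (G i)]
variable [DecidableEq ι] [∀ i, DecidableEq (G i)]

lemma fstIdx_of_smul {j : ι} (m : G j) (hm : m ≠ 1) (v : Word G) (hv : v.fstIdx ≠ some j) :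
    (CoprodI.of m • v).fstIdx = some j := by
  rw [← cons_eq_smul (h1 := hv) (h2 := hm)]
  simp

lemma neword_smul_fstIdx :
    ∀ {j k} (nw : NeWord G j k) (i : ι), k ≠ i →
      ∀ v : Word G, v.fstIdx = some i → (nw.prod • v).fstIdx = some j := by
  intro j k nw
  induction nw with
  | singleton x hx =>
    intro i hk v hv
    rw [NeWord.prod_singleton]
    exact fstIdx_of_smul x hx v (by rw [hv]; simpa using fun h => hk h.symm)
  | append w₁ hne w₂ ih₁ ih₂ =>
    intro i hk v hv
    rw [NeWord.append_prod, mul_smul]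
    exact ih₁ _ hne _ (ih₂ i hk v hv)

lemma inv_toList_length : ∀ {j k} (nw : NeWord G j k),
    nw.inv.toList.length = nw.toList.length := by
  intro j k nw
  induction nw with
  | singleton x hx => rfl
  | append w₁ hne w₂ ih₁ ih₂ =>
    simp only [NeWord.inv, NeWord.toList, List.length_append, ih₁, ih₂]
    omega

/-- Strip the leading `i`-letter. -/
lemma strip_left {i : ι} (g : CoprodI G) (hfi : (Word.equiv g).fstIdx = some i) :
    ∃ (h : G i) (g' : CoprodI G), g = CoprodI.of h * g' ∧
      (Word.equiv g').toList.length + 1 = (Word.equiv g).toList.length ∧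
      (Word.equiv g').fstIdx ≠ some i := by
  set w := Word.equiv g with hw
  have hpw : w.prod = g := Word.equiv.symm_apply_apply g
  set p := Word.equivPair i w with hp
  have hrw : Word.rcons p = w := (Word.equivPair i).symm_apply_apply w
  have hh : p.head ≠ 1 := by
    intro h1
    rw [Word.rcons, dif_pos h1] at hrw
    exact p.fstIdx_ne (hrw ▸ hfi)
  have hcons : w = Word.cons p.head p.tail p.fstIdx_ne hh := by
    rw [← hrw, Word.rcons, dif_neg hh]
  have het : Word.equiv p.tail.prod = p.tail := Word.equiv.apply_symm_apply p.tail
  refine ⟨p.head, p.tail.prod, ?_, ?_, ?_⟩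
  · rw [← hpw, ← hrw, Word.prod_rcons]
  · rw [het, hcons]
    simp [Word.cons]
  · rw [het]
    exact p.fstIdx_ne

lemma conj_ne_one {H : Type*} [Group H] {a h : H} (ha : a ≠ 1) : h⁻¹ * a * h ≠ 1 := by
  intro h1
  apply ha
  have := congrArg (fun x => h * x * h⁻¹) h1
  simpa [mul_assoc] using this

lemma conj_step {i : ι} {a a' h : G i} {g g' : CoprodI G}
    (hE : CoprodI.of a * g = g * CoprodI.of a') (hg : g = CoprodI.of h * g') :
    CoprodI.of (h⁻¹ * a * h) * g' = g' * CoprodI.of a' := by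
  rw [hg] at hE
  rw [map_mul, map_mul, map_inv]
  simp only [mul_assoc] at hE ⊢
  rw [hE, inv_mul_cancel_left]

lemma core {i : ι} : ∀ (n : ℕ) (g : CoprodI G), (Word.equiv g).toList.length ≤ n →
    ∀ a a' : G i, a ≠ 1 → CoprodI.of a * g = g * CoprodI.of a' →
    g ∈ (CoprodI.of (M := G) (i := i)).range := by
  intro n
  induction n with
  | zero =>
    intro g hlen a a' ha hE
    have : (Word.equiv g).toList = [] := List.length_eq_zero_iff.mp (Nat.le_zero.mp hlen)
    have hw : Word.equiv g = Word.empty := Word.ext this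
    have : g = 1 := by
      have := Word.equiv.symm_apply_apply g
      rw [hw] at this
      exact this.symm
    rw [this]; exact one_mem _
  | succ n ih =>
    intro g hlen a a' ha hE
    have hpw : (Word.equiv g).prod = g := Word.equiv.symm_apply_apply g
    have ha' : a' ≠ 1 := by
      rintro rfl
      apply ha
      apply CoprodI.of_injective i
      have : CoprodI.of a * g = g := by simpa using hE
      rw [map_one]
      exact mul_right_cancel (by rw [this, one_mul])
    by_cases hfi : (Word.equiv g).fstIdx = some i
    · obtain ⟨h, g', rfl, hlen', _⟩ := strip_left g hfi
      have hg' : g' ∈ (CoprodI.of (M := G) (i := i)).range :=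
        ih g' (by omega) _ a' (conj_ne_one ha) (conj_step hE rfl)
      exact mul_mem ⟨h, rfl⟩ hg'
    · by_cases hnil : (Word.equiv g).toList = []
      · have hw : Word.equiv g = Word.empty := Word.ext hnil
        have : g = 1 := by
          have := Word.equiv.symm_apply_apply g
          rw [hw] at this
          exact this.symm
        rw [this]; exact one_mem _
      · obtain ⟨j, k, nw, hnw⟩ := NeWord.of_word (Word.equiv g)
          (fun h => hnil (by rw [h]; rfl))
        have htl : nw.toList = (Word.equiv g).toList := by rw [← hnw]; rfl
        have hgnw : nw.prod = g := by rw [NeWord.prod, hnw, hpw]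
        have hj : (Word.equiv g).fstIdx = some j := by
          have := nw.toList_head?
          rw [htl] at this
          simp [Word.fstIdx, this]
        have hij : j ≠ i := fun h => hfi (h ▸ hj)
        by_cases hk : k = i
        · -- use the inverse
          have hinv : Word.equiv g⁻¹ = nw.inv.toWord := by
            apply (Equiv.apply_eq_iff_eq_symm_apply _).mpr
            show g⁻¹ = (nw.inv.toWord).prod
            rw [← NeWord.prod, NeWord.inv_prod, hgnw]
          have hfi' : (Word.equiv g⁻¹).fstIdx = some i := by
            rw [hinv]
            have h3 := nw.inv.toList_head?
            show ((nw.inv.toWord).toList.head?).map Sigma.fst = some i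
            rw [show (nw.inv.toWord).toList = nw.inv.toList from rfl, h3]
            simp [hk]
          obtain ⟨h, g', hg'eq, hlen', _⟩ := strip_left g⁻¹ hfi'
          have hlg : (Word.equiv g⁻¹).toList.length ≤ n + 1 := by
            rw [hinv]
            show (nw.inv.toWord).toList.length ≤ n + 1
            have : (nw.inv.toWord).toList = nw.inv.toList := rfl
            rw [this, inv_toList_length, htl]
            exact hlen
          have hE' : CoprodI.of a'⁻¹ * g⁻¹ = g⁻¹ * CoprodI.of a⁻¹ := by
            rw [map_inv, map_inv]
            rw [← mul_inv_rev, ← mul_inv_rev, hE]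
          have hg' : g' ∈ (CoprodI.of (M := G) (i := i)).range :=
            ih g' (by omega) _ a⁻¹ (conj_ne_one (by simp [ha'])) (conj_step hE' hg'eq)
          rw [← inv_inv g, hg'eq]
          exact inv_mem (mul_mem ⟨h, rfl⟩ hg')
        · -- ping-pong contradiction
          exfalso
          set v := CoprodI.of a'⁻¹ • (Word.empty : Word G) with hv
          have hvf : v.fstIdx = some i :=
            fstIdx_of_smul a'⁻¹ (by simp [ha']) _ (by simp [Word.fstIdx])
          have h1 : ((nw.prod) • v).fstIdx = some j :=
            neword_smul_fstIdx nw i hk v hvf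
          have h2 : (CoprodI.of a • nw.prod • v).fstIdx = some i := by
            apply fstIdx_of_smul a ha
            rw [h1]
            simpa using hij
          apply hfi
          rw [← h2]
          congr 1
          show Word.equiv g = _
          have : CoprodI.of a * g * CoprodI.of a'⁻¹ = g := by
            rw [map_inv, hE, mul_assoc, mul_inv_cancel, mul_one]
          calc Word.equiv g = g • (Word.empty : Word G) := rfl
            _ = (CoprodI.of a * g * CoprodI.of a'⁻¹) • (Word.empty : Word G) := by rw [this]
            _ = CoprodI.of a • nw.prod • v := by
                rw [hv, hgnw, mul_smul, mul_smul]


namespace Bool2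

universe u v
variable (A : Type u) (B : Type v) [Group A] [Group B]

abbrev Fam : Bool → Type (max u v) := fun b => Bool.rec (ULift.{u} B) (ULift.{v} A) b

instance : ∀ b, Group (Fam A B b) := fun b =>
  Bool.rec (inferInstanceAs (Group (ULift B))) (inferInstanceAs (Group (ULift A))) b

def toI : Monoid.Coprod A B →* CoprodI (Fam A B) :=
  Coprod.lift
    ((CoprodI.of (M := Fam A B) (i := true)).comp (MulEquiv.ulift.symm : A ≃* ULift A).toMonoidHom)
    ((CoprodI.of (M := Fam A B) (i := false)).comp (MulEquiv.ulift.symm : B ≃* ULift B).toMonoidHom)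

def ofI : CoprodI (Fam A B) →* Monoid.Coprod A B :=
  CoprodI.lift (fun b => Bool.rec
    (Coprod.inr.comp (MulEquiv.ulift : ULift B ≃* B).toMonoidHom)
    (Coprod.inl.comp (MulEquiv.ulift : ULift A ≃* A).toMonoidHom) b)

@[simp] lemma toI_inl (a : A) :
    toI A B (Coprod.inl a) = CoprodI.of (M := Fam A B) (i := true) (ULift.up a) := by
  simp [toI, MulEquiv.ulift, Equiv.ulift]

@[simp] lemma toI_inr (b : B) :
    toI A B (Coprod.inr b) = CoprodI.of (M := Fam A B) (i := false) (ULift.up b) := by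
  simp [toI, MulEquiv.ulift, Equiv.ulift]

@[simp] lemma ofI_of_true (a : ULift A) :
    ofI A B (CoprodI.of (M := Fam A B) (i := true) a) = Coprod.inl a.down := by
  simp [ofI, MulEquiv.ulift, Equiv.ulift]

@[simp] lemma ofI_of_false (b : ULift B) :
    ofI A B (CoprodI.of (M := Fam A B) (i := false) b) = Coprod.inr b.down := by
  simp [ofI, MulEquiv.ulift, Equiv.ulift]

lemma ofI_toI (x : Monoid.Coprod A B) : ofI A B (toI A B x) = x := by
  have : (ofI A B).comp (toI A B) = MonoidHom.id _ := by
    apply Coprod.hom_ext <;> ext x <;> simp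
    exacts [ofI_of_true A B _, ofI_of_false A B _]
  exact DFunLike.congr_fun this x

end Bool2

end Stmt10Aux

open Stmt10Aux Stmt10Aux.Bool2 in
theorem stmt10 {A B : Type*} [Group A] [Group B] :
    (∀ g : Monoid.Coprod A B,
       g ∉ (Monoid.Coprod.inl : A →* Monoid.Coprod A B).range →
       (Monoid.Coprod.inl : A →* Monoid.Coprod A B).range ⊓
         ((Monoid.Coprod.inl : A →* Monoid.Coprod A B).range.map
           (MulAut.conj g).toMonoidHom) = ⊥) ∧
    (∀ g : Monoid.Coprod A B,
       (Monoid.Coprod.inl : A →* Monoid.Coprod A B).range ⊓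
         ((Monoid.Coprod.inr : B →* Monoid.Coprod A B).range.map
           (MulAut.conj g).toMonoidHom) = ⊥) := by
  classical
  constructor
  · intro g hg
    rw [eq_bot_iff]
    intro x hx
    rw [Subgroup.mem_inf] at hx
    obtain ⟨⟨a, rfl⟩, hx2⟩ := hx
    rw [Subgroup.mem_map] at hx2
    obtain ⟨y, ⟨a', rfl⟩, hy⟩ := hx2
    simp only [MulEquiv.coe_toMonoidHom, MulAut.conj_apply] at hy
    by_cases ha : a = 1
    · simp [ha, Subgroup.mem_bot]
    · exfalso
      apply hg
      have hE : Monoid.Coprod.inl a * g = g * Monoid.Coprod.inl a' := by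
        rw [← hy]; group
      have hE' : Monoid.CoprodI.of (M := Fam A B) (i := true) (ULift.up a) * (toI A B g)
          = (toI A B g) * Monoid.CoprodI.of (M := Fam A B) (i := true) (ULift.up a') := by
        have := congrArg (toI A B) hE
        simpa using this
      have hmem := Stmt10Aux.core (i := true) (G := Fam A B)
        ((Monoid.CoprodI.Word.equiv (toI A B g)).toList.length) (toI A B g) le_rfl
        (ULift.up a) (ULift.up a') (fun h => ha (congrArg ULift.down h)) hE'
      obtain ⟨c, hc⟩ := hmem
      refine ⟨c.down, ?_⟩
      have := congrArg (ofI A B) hc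
      rwa [ofI_of_true, ofI_toI] at this
  · intro g
    rw [eq_bot_iff]
    intro x hx
    rw [Subgroup.mem_inf] at hx
    obtain ⟨⟨a, rfl⟩, hx2⟩ := hx
    rw [Subgroup.mem_map] at hx2
    obtain ⟨y, ⟨b, rfl⟩, hy⟩ := hx2
    simp only [MulEquiv.coe_toMonoidHom, MulAut.conj_apply] at hy
    have : a = 1 := by
      have := congrArg Monoid.Coprod.fst hy
      simpa using this.symm
    simp [this, Subgroup.mem_bot]
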